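/- With the matrices A = A_w, B = B_w constructed from a word w of length n as above, define f_w(t) = (t(AB, BA))_{1, n+1} for any word t over {a,b}. Then f_w(t) ≤ f_w(w) for every word t, with equality if and only if w is a factor of t. -/

import Mathlib

/-- The tropical (max-plus) semiring `ℝ ∪ {-∞}`: `⊥` is `-∞`,
`Finset.sup` is tropical sum (max), `+` is tropical product. -/
abbrev Trop := WithBot ℝ

/-- Tropical (max-plus) matrix multiplication: `(X*Y) i j = max_k (X i k + Y k j)`. -/
def tmul {ι : Type*} [Fintype ι] (X Y : Matrix ι ι Trop) : Matrix ι ι Trop :=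
  fun i j => Finset.univ.sup fun k => X i k + Y k j

/-- The tropical identity matrix: `0` on the diagonal, `-∞` elsewhere. -/
def tId (ι : Type*) [DecidableEq ι] : Matrix ι ι Trop :=
  fun i j => if i = j then (0 : Trop) else ⊥

/-- Upper triangular tropical matrices: `-∞` below the diagonal. -/
def IsUT {n : ℕ} (X : Matrix (Fin n) (Fin n) Trop) : Prop :=
  ∀ i j : Fin n, (j : ℕ) < (i : ℕ) → X i j = ⊥

/-- Evaluation of a word over the alphabet `{a, b}` (encoded as `Bool`,
with `a = true`, `b = false`) at matrices `X, Y` (substituting `a ↦ X`, `b ↦ Y`),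
using tropical matrix multiplication. -/
def evalWord {ι : Type*} [Fintype ι] [DecidableEq ι] (w : List Bool)
    (X Y : Matrix ι ι Trop) : Matrix ι ι Trop :=
  (w.map fun c => if c then X else Y).foldr tmul (tId ι)

/-- Substitution of words into a word: `subst w x y = w[x, y]`
(replace each `a = true` by the word `x` and each `b = false` by `y`). -/
def subst (w x y : List Bool) : List Bool :=
  w.flatMap fun c => if c then x else y

/-- The parameters `c₁, …, c_{n+1}` from a word `w` (indexed here from `0`):
`wparam w k` is the paper's `c_{k+1}`. -/
def wparam (w : List Bool) (k : ℕ) : ℝ :=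
  ((w.take k).count false : ℝ) - ((w.take k).count true : ℝ)

def rho (w : List Bool) (i : ℕ) (c : Bool) : ℝ :=
  if c then wparam w i else wparam w (i + 1)

def gval (w : List Bool) : List Bool → ℕ → ℝ
  | [], _ => 0
  | c :: u, i => rho w i c + gval w u (i + 1)

lemma wparam_succ (w : List Bool) (i : ℕ) (h : i < w.length) :
    wparam w (i + 1) = wparam w i + (if w[i] then -1 else 1) := by
  have ht : w.take (i + 1) = w.take i ++ [w[i]] := by
    rw [List.take_succ, List.getElem?_eq_getElem h]; rfl
  unfold wparam
  rw [ht, List.count_append, List.count_append]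
  cases hb : w[i] <;> simp [hb] <;> push_cast <;> ring

lemma rho_le (w : List Bool) (i : ℕ) (h : i < w.length) (c : Bool) :
    rho w i c ≤ rho w i w[i] ∧ (rho w i c = rho w i w[i] ↔ c = w[i]) := by
  have hs := wparam_succ w i h
  unfold rho
  cases hb : w[i] <;> cases c <;> simp [hb] at hs ⊢ <;>
    constructor <;> first | linarith | (intro h'; linarith)

lemma gval_le (w : List Bool) : ∀ (u : List Bool) (i : ℕ), i + u.length ≤ w.length →
    gval w u i ≤ gval w ((w.drop i).take u.length) i ∧
      (gval w u i = gval w ((w.drop i).take u.length) i ↔ u = (w.drop i).take u.length) := by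
  intro u
  induction u with
  | nil => intro i _; simp [gval]
  | cons c u ih =>
    intro i hi
    have hlt : i < w.length := by simp at hi; omega
    have hdrop : w.drop i = w[i] :: w.drop (i + 1) := (List.getElem_cons_drop hlt).symm
    have hslice : (w.drop i).take (c :: u).length
        = w[i] :: (w.drop (i + 1)).take u.length := by
      rw [hdrop]; rfl
    have ih' := ih (i + 1) (by simp at hi ⊢; omega)
    have hr := rho_le w i hlt c
    rw [hslice]
    constructor
    · show rho w i c + gval w u (i+1) ≤ rho w i w[i] + gval w ((w.drop (i+1)).take u.length) (i+1)
      linarith [ih'.1, hr.1]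
    · constructor
      · intro he
        have h1 : rho w i c = rho w i w[i] := by
          have := ih'.1; have := hr.1
          show _ = _
          by_contra hne
          have : rho w i c < rho w i w[i] := lt_of_le_of_ne hr.1 hne
          have he' : rho w i c + gval w u (i+1)
              = rho w i w[i] + gval w ((w.drop (i+1)).take u.length) (i+1) := he
          linarith
        have h2 : gval w u (i+1) = gval w ((w.drop (i+1)).take u.length) (i+1) := by
          have he' : rho w i c + gval w u (i+1)
              = rho w i w[i] + gval w ((w.drop (i+1)).take u.length) (i+1) := he
          linarith
        rw [List.cons_eq_cons]
        exact ⟨hr.2.mp h1, ih'.2.mp h2⟩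
      · intro he
        rw [List.cons_eq_cons] at he
        show rho w i c + gval w u (i+1) = rho w i w[i] + gval w ((w.drop (i+1)).take u.length) (i+1)
        rw [hr.2.mpr he.1, ih'.2.mpr he.2]

lemma sup_single {ι : Type*} [Fintype ι] (f : ι → Trop) (a : ι)
    (h : ∀ k, k ≠ a → f k = ⊥) : Finset.univ.sup f = f a := by
  apply le_antisymm
  · exact Finset.sup_le fun k _ => by
      by_cases hk : k = a
      · subst hk; exact le_rfl
      · rw [h k hk]; exact bot_le
  · exact Finset.le_sup (Finset.mem_univ a)

lemma sup_pair {ι : Type*} [Fintype ι] (f : ι → Trop) (a b : ι)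
    (h : ∀ k, k ≠ a → k ≠ b → f k = ⊥) : Finset.univ.sup f = f a ⊔ f b := by
  apply le_antisymm
  · exact Finset.sup_le fun k _ => by
      by_cases hk : k = a
      · subst hk; exact le_sup_left
      by_cases hk' : k = b
      · subst hk'; exact le_sup_right
      · rw [h k hk hk']; exact bot_le
  · exact sup_le (Finset.le_sup (Finset.mem_univ a)) (Finset.le_sup (Finset.mem_univ b))

/-- the candidate value of the (0, n) entry -/
def Sval (w : List Bool) (n : ℕ) (t : List Bool) : Trop :=
  (Finset.range (t.length + 1)).sup fun s =>
    if s + n ≤ t.length then (((gval w ((t.drop s).take n) 0 : ℝ)) : Trop) else ⊥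

/-- the candidate value of the last column -/
def Lcol (w : List Bool) (n : ℕ) (t : List Bool) (k : ℕ) : Trop :=
  if k = 0 then Sval w n t
  else if n ≤ k + t.length then ((gval w (t.take (n - k)) k : ℝ) : Trop) else ⊥

lemma Sval_zero (w : List Bool) (t : List Bool) : Sval w 0 t = 0 := by
  unfold Sval
  apply le_antisymm
  · apply Finset.sup_le
    intro s hs
    simp at hs
    rw [if_pos (by omega)]
    simp [gval]
  · have := Finset.le_sup (f := fun s =>
      if s + 0 ≤ t.length then (((gval w ((t.drop s).take 0) 0 : ℝ)) : Trop) else ⊥)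
      (Finset.mem_range.mpr (Nat.succ_pos t.length))
    simpa [gval] using this

lemma Sval_cons (w : List Bool) (n : ℕ) (hn : 1 ≤ n) (c : Bool) (t : List Bool) :
    Sval w n (c :: t) = Sval w n t ⊔ (((rho w 0 c : ℝ) : Trop) +
      if n ≤ 1 + t.length then ((gval w (t.take (n - 1)) 1 : ℝ) : Trop) else ⊥) := by
  have hterm0 : (if 0 + n ≤ (c :: t).length then
      (((gval w (((c :: t).drop 0).take n) 0 : ℝ)) : Trop) else ⊥)
      = ((rho w 0 c : ℝ) : Trop) +
        (if n ≤ 1 + t.length then ((gval w (t.take (n - 1)) 1 : ℝ) : Trop) else ⊥) := by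
    by_cases hc : n ≤ 1 + t.length
    · rw [if_pos (by simp only [List.length_cons]; omega), if_pos hc]
      rw [← WithBot.coe_add]
      congr 1
      have : (c :: t).take n = c :: t.take (n - 1) := by
        obtain ⟨m, rfl⟩ : ∃ m, n = m + 1 := ⟨n - 1, by omega⟩
        simp
      rw [List.drop_zero, this]
      rfl
    · rw [if_neg (by simp only [List.length_cons]; omega), if_neg hc, WithBot.add_bot]
  have hshift : ∀ s, (if (s + 1) + n ≤ (c :: t).length then
      (((gval w (((c :: t).drop (s + 1)).take n) 0 : ℝ)) : Trop) else ⊥)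
      = (if s + n ≤ t.length then (((gval w ((t.drop s).take n) 0 : ℝ)) : Trop) else ⊥) := by
    intro s
    simp only [List.drop_succ_cons, List.length_cons]
    congr 1
    · simp only [eq_iff_iff]; omega
  apply le_antisymm
  · apply Finset.sup_le
    intro s hs
    simp only [Finset.mem_range, List.length_cons] at hs
    match s with
    | 0 => rw [hterm0]; exact le_sup_right
    | s + 1 =>
      rw [hshift s]
      exact le_sup_of_le_left (Finset.le_sup (f := fun s =>
        if s + n ≤ t.length then (((gval w ((t.drop s).take n) 0 : ℝ)) : Trop) else ⊥)
        (Finset.mem_range.mpr (by omega)))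
  · apply sup_le
    · apply Finset.sup_le
      intro s hs
      simp only [Finset.mem_range] at hs
      rw [← hshift s]
      exact Finset.le_sup (f := fun s => if s + n ≤ (c :: t).length then
          (((gval w (((c :: t).drop s).take n) 0 : ℝ)) : Trop) else ⊥)
        (Finset.mem_range.mpr (by simp only [List.length_cons]; omega))
    · rw [← hterm0]
      exact Finset.le_sup (f := fun s => if s + n ≤ (c :: t).length then
          (((gval w (((c :: t).drop s).take n) 0 : ℝ)) : Trop) else ⊥)
        (Finset.mem_range.mpr (by omega))

lemma Sval_nil (w : List Bool) (n : ℕ) :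
    Sval w n [] = if n = 0 then 0 else ⊥ := by
  unfold Sval
  rw [show Finset.range ([].length + 1) = {0} from rfl, Finset.sup_singleton]
  by_cases hn : n = 0
  · subst hn; simp [gval]
  · rw [if_neg (by simp; omega), if_neg hn]

lemma evalWord_col (n : ℕ) (w : List Bool)
    (X Y : Matrix (Fin (n + 1)) (Fin (n + 1)) Trop)
    (hX : ∀ i j, X i j = if (i : ℕ) + 1 = (j : ℕ) then ((wparam w i : ℝ) : Trop)
      else if i = j ∧ ((i : ℕ) = 0 ∨ (i : ℕ) = n) then 0 else ⊥)
    (hY : ∀ i j, Y i j = if (i : ℕ) + 1 = (j : ℕ) then ((wparam w ((i : ℕ) + 1) : ℝ) : Trop)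
      else if i = j ∧ ((i : ℕ) = 0 ∨ (i : ℕ) = n) then 0 else ⊥) :
    ∀ (t : List Bool) (k : Fin (n + 1)),
      evalWord t X Y k (Fin.last n) = Lcol w n t (k : ℕ) := by
  have hM : ∀ (c : Bool) (i j : Fin (n + 1)), (if c then X else Y) i j =
      if (i : ℕ) + 1 = (j : ℕ) then ((rho w i c : ℝ) : Trop)
      else if i = j ∧ ((i : ℕ) = 0 ∨ (i : ℕ) = n) then 0 else ⊥ := by
    intro c i j
    cases c
    · simpa [rho] using hY i j
    · simpa [rho] using hX i j
  intro t
  induction t with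
  | nil =>
    intro k
    show tId (Fin (n + 1)) k (Fin.last n) = _
    unfold tId Lcol
    by_cases hk0 : (k : ℕ) = 0
    · rw [if_pos hk0, Sval_nil]
      by_cases hn : n = 0
      · rw [if_pos (by apply Fin.ext; simp [hk0, Fin.last, hn]), if_pos hn]
      · rw [if_neg (by intro h; apply hn; have := congrArg Fin.val h; simp [Fin.last] at this; omega),
          if_neg hn]
    · rw [if_neg hk0]
      by_cases hkn : (k : ℕ) = n
      · rw [if_pos (by apply Fin.ext; simpa [Fin.last] using hkn),
          if_pos (by simp; omega)]
        simp [show n - (k : ℕ) = 0 by omega, gval]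
      · rw [if_neg (by intro h; apply hkn; have := congrArg Fin.val h; simpa [Fin.last] using this),
          if_neg (by simp; omega)]
  | cons c t ih =>
    intro k
    have hstep : evalWord (c :: t) X Y = tmul (if c then X else Y) (evalWord t X Y) := rfl
    rw [hstep]
    show Finset.univ.sup (fun j => (if c then X else Y) k j + evalWord t X Y j (Fin.last n)) = _
    by_cases hkn : (k : ℕ) = n
    · rw [sup_single _ k (by
        intro j hj
        rw [hM, if_neg (by have := j.isLt; omega),
          if_neg (by rintro ⟨h, -⟩; exact hj h.symm), WithBot.bot_add])]
      rw [hM, if_neg (by omega), if_pos ⟨rfl, Or.inr hkn⟩, ih k, zero_add]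
      unfold Lcol
      by_cases hn : n = 0
      · subst hn
        rw [if_pos (by omega), Sval_zero, Sval_zero, if_pos hkn]
      · rw [if_neg (by omega),
          if_pos (show n ≤ (k : ℕ) + t.length by omega),
          if_neg (by omega),
          if_pos (show n ≤ (k : ℕ) + (c :: t).length by simp only [List.length_cons]; omega)]
        simp [show n - (k : ℕ) = 0 by omega, gval]
    · by_cases hk0 : (k : ℕ) = 0
      · have hn : 1 ≤ n := by omega
        set j1 : Fin (n + 1) := ⟨1, by omega⟩ with hj1
        rw [sup_pair _ k j1 (by
          intro j hj hj'
          rw [hM, if_neg (by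
              intro h
              exact hj' (Fin.ext (by simp [hj1]; omega))),
            if_neg (by rintro ⟨h, -⟩; exact hj h.symm), WithBot.bot_add])]
        rw [hM c k k, if_neg (by omega), if_pos ⟨rfl, Or.inl hk0⟩,
          hM c k j1, if_pos (by simp only [hj1]; omega), ih k, ih j1, zero_add]
        unfold Lcol
        rw [if_pos hk0, if_pos hk0, if_neg (by simp [hj1]), Sval_cons w n hn c t]
        simp only [hk0, hj1]
      · -- interior : 0 < k < n
        have hklt : (k : ℕ) < n := by omega
        set j1 : Fin (n + 1) := ⟨(k : ℕ) + 1, by omega⟩ with hj1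
        rw [sup_single _ j1 (by
          intro j hj
          rw [hM, if_neg (by intro h; exact hj (Fin.ext (by simp [hj1]; omega))),
            if_neg (by rintro ⟨h, hc⟩; subst h; omega), WithBot.bot_add])]
        rw [hM c k j1, if_pos (by simp [hj1]), ih j1]
        unfold Lcol
        rw [if_neg hk0, if_neg (by simp [hj1])]
        by_cases hcond : n ≤ (k : ℕ) + (c :: t).length
        · rw [if_pos (show n ≤ (k : ℕ) + 1 + t.length by
              simp only [List.length_cons] at hcond; omega),
            if_pos hcond, ← WithBot.coe_add]
          congr 1
          have hm : n - (k : ℕ) = (n - (k : ℕ) - 1) + 1 := by omega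
          rw [hm, List.take_succ_cons]
          show rho w k c + gval w (t.take (n - ((k:ℕ) + 1))) ((k:ℕ) + 1)
            = rho w k c + gval w (t.take (n - (k:ℕ) - 1)) ((k:ℕ) + 1)
          rw [show n - ((k:ℕ) + 1) = n - (k:ℕ) - 1 from by omega]
        · rw [if_neg (show ¬ n ≤ (k : ℕ) + 1 + t.length by
              simp only [List.length_cons] at hcond; omega),
            if_neg hcond, WithBot.add_bot]

lemma Sval_self (w : List Bool) (n : ℕ) (hw : w.length = n) :
    Sval w n w = ((gval w w 0 : ℝ) : Trop) := by
  apply le_antisymm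
  · apply Finset.sup_le
    intro s hs
    by_cases hc : s + n ≤ w.length
    · have hs0 : s = 0 := by omega
      subst hs0
      rw [if_pos hc, List.drop_zero, ← hw, List.take_length]
    · rw [if_neg hc]; exact bot_le
  · have h0 : (if 0 + n ≤ w.length then (((gval w ((w.drop 0).take n) 0 : ℝ)) : Trop) else ⊥)
        = ((gval w w 0 : ℝ) : Trop) := by
      rw [if_pos (by omega), List.drop_zero, ← hw, List.take_length]
    rw [← h0]
    exact Finset.le_sup (f := fun s => if s + n ≤ w.length then
      (((gval w ((w.drop s).take n) 0 : ℝ)) : Trop) else ⊥) (Finset.mem_range.mpr (by omega))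

lemma Sval_le (w : List Bool) (n : ℕ) (hw : w.length = n) (t : List Bool) :
    Sval w n t ≤ ((gval w w 0 : ℝ) : Trop) := by
  apply Finset.sup_le
  intro s hs
  by_cases hc : s + n ≤ t.length
  · rw [if_pos hc]
    set u := (t.drop s).take n with hu
    have hlen : u.length = n := by
      rw [hu, List.length_take, List.length_drop]; omega
    have := (gval_le w u 0 (by omega)).1
    rw [List.drop_zero, hlen, ← hw, List.take_length] at this
    exact WithBot.coe_le_coe.mpr this
  · rw [if_neg hc]; exact bot_le

lemma Sval_eq_iff (w : List Bool) (n : ℕ) (hw : w.length = n) (t : List Bool) :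
    Sval w n t = ((gval w w 0 : ℝ) : Trop) ↔ w <:+: t := by
  constructor
  · intro h
    obtain ⟨s, hs, hsup⟩ := Finset.exists_mem_eq_sup (Finset.range (t.length + 1))
      ⟨0, Finset.mem_range.mpr (by omega)⟩
      (fun s => if s + n ≤ t.length then (((gval w ((t.drop s).take n) 0 : ℝ)) : Trop) else ⊥)
    unfold Sval at h
    rw [hsup] at h
    by_cases hc : s + n ≤ t.length
    · rw [if_pos hc] at h
      set u := (t.drop s).take n with hu
      have hlen : u.length = n := by
        rw [hu, List.length_take, List.length_drop]; omega
      have heq : gval w u 0 = gval w w 0 := WithBot.coe_inj.mp h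
      have huw : u = w := by
        have h2 := (gval_le w u 0 (by omega)).2
        rw [List.drop_zero, hlen, ← hw, List.take_length] at h2
        exact h2.mp heq
      exact ⟨t.take s, (t.drop s).drop n, by
        rw [← huw, hu, List.append_assoc, List.take_append_drop, List.take_append_drop]⟩
    · rw [if_neg hc] at h
      exact absurd h.symm (WithBot.coe_ne_bot)
  · rintro ⟨p, q, rfl⟩
    apply le_antisymm (Sval_le w n hw _)
    have hdrop : (p ++ w ++ q).drop p.length = w ++ q := by
      rw [List.append_assoc, List.drop_left]
    have hterm : (if p.length + n ≤ (p ++ w ++ q).length then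
        (((gval w (((p ++ w ++ q).drop p.length).take n) 0 : ℝ)) : Trop) else ⊥)
        = ((gval w w 0 : ℝ) : Trop) := by
      rw [if_pos (by simp [List.length_append]; omega), hdrop, List.take_left' hw]
    rw [← hterm]
    exact Finset.le_sup (f := fun s => if s + n ≤ (p ++ w ++ q).length then
      (((gval w (((p ++ w ++ q).drop s).take n) 0 : ℝ)) : Trop) else ⊥)
      (Finset.mem_range.mpr (by simp [List.length_append]))


/-- With `A = A_w`, `B = B_w` built from a word `w` of length `n`, and
`f_w(t) = (t(AB, BA))_{1, n+1}`, one has `f_w(t) ≤ f_w(w)` for every word `t`,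
with equality if and only if `w` is a factor of `t`. -/
theorem stmt3 (n : ℕ) (w : List Bool) (hw : w.length = n)
    (A B : Matrix (Fin (n + 1)) (Fin (n + 1)) Trop)
    (hA : ∀ i j : Fin (n + 1), A i j =
      if i = j then ((wparam w (i : ℕ) : ℝ) : Trop) else ⊥)
    (hB : ∀ i j : Fin (n + 1), B i j =
      if (i : ℕ) + 1 = (j : ℕ) then (0 : Trop)
      else if i = j ∧ ((i : ℕ) = 0 ∨ (i : ℕ) = n) then ((-(wparam w (i : ℕ)) : ℝ) : Trop)
      else ⊥) :
    ∀ t : List Bool,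
      evalWord t (tmul A B) (tmul B A) 0 (Fin.last n) ≤
        evalWord w (tmul A B) (tmul B A) 0 (Fin.last n) ∧
      (evalWord t (tmul A B) (tmul B A) 0 (Fin.last n) =
          evalWord w (tmul A B) (tmul B A) 0 (Fin.last n) ↔ w <:+: t) := by
  have hX : ∀ i j, (tmul A B) i j =
      if (i : ℕ) + 1 = (j : ℕ) then ((wparam w i : ℝ) : Trop)
      else if i = j ∧ ((i : ℕ) = 0 ∨ (i : ℕ) = n) then 0 else ⊥ := by
    intro i j
    show Finset.univ.sup (fun k => A i k + B k j) = _
    rw [sup_single _ i (by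
      intro k hk
      rw [hA, if_neg (fun h => hk h.symm), WithBot.bot_add])]
    rw [hA, if_pos rfl, hB]
    by_cases h1 : (i : ℕ) + 1 = (j : ℕ)
    · rw [if_pos h1, if_pos h1, add_zero]
    · rw [if_neg h1, if_neg h1]
      by_cases h2 : i = j ∧ ((i : ℕ) = 0 ∨ (i : ℕ) = n)
      · rw [if_pos h2, if_pos h2, ← WithBot.coe_add]
        norm_num
      · rw [if_neg h2, if_neg h2, WithBot.add_bot]
  have hY : ∀ i j, (tmul B A) i j =
      if (i : ℕ) + 1 = (j : ℕ) then ((wparam w ((i : ℕ) + 1) : ℝ) : Trop)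
      else if i = j ∧ ((i : ℕ) = 0 ∨ (i : ℕ) = n) then 0 else ⊥ := by
    intro i j
    show Finset.univ.sup (fun k => B i k + A k j) = _
    rw [sup_single _ j (by
      intro k hk
      rw [hA, if_neg hk, WithBot.add_bot])]
    rw [hA, if_pos rfl, hB]
    by_cases h1 : (i : ℕ) + 1 = (j : ℕ)
    · rw [if_pos h1, if_pos h1, zero_add, h1]
    · rw [if_neg h1, if_neg h1]
      by_cases h2 : i = j ∧ ((i : ℕ) = 0 ∨ (i : ℕ) = n)
      · rw [if_pos h2, if_pos h2, ← WithBot.coe_add, ← h2.1]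
        norm_num
      · rw [if_neg h2, if_neg h2, WithBot.bot_add]
  have hcol := evalWord_col n w (tmul A B) (tmul B A) hX hY
  have hzero : ∀ t : List Bool,
      evalWord t (tmul A B) (tmul B A) 0 (Fin.last n) = Sval w n t := by
    intro t
    rw [hcol t 0]
    unfold Lcol
    simp
  intro t
  rw [hzero t, hzero w, Sval_self w n hw]
  exact ⟨Sval_le w n hw t, Sval_eq_iff w n hw t⟩
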